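/- (Proper labelings of arbitrary connected labels are centre-disjoint) Let P be a finite set of points in ℝ², and for each p ∈ P let L_p ⊆ ℝ² be a compact connected set with p ∈ L_p, of circumradius r_p = max{‖x − p‖ : x ∈ L_p} about p. Suppose that for all angles θ and all distinct p, q ∈ P, the rotated sets (L_p)_θ and (L_q)_θ about their respective anchors are disjoint. Then for all distinct p, q ∈ P, ‖p − q‖ > max(r_p, r_q); i.e., the disks D(p, r_p) are centre-disjoint. -/

import Mathlib

open Real Set Metric

/-- Rotation of the plane by angle `θ` about the origin. -/
noncomputable def rotv (θ : ℝ) (v : EuclideanSpace ℝ (Fin 2)) : EuclideanSpace ℝ (Fin 2) :=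
  WithLp.toLp 2 ![Real.cos θ * v 0 - Real.sin θ * v 1, Real.sin θ * v 0 + Real.cos θ * v 1]

/-- The set `A` rotated rigidly by angle `θ` about the anchor point `p`. -/
noncomputable def rotAbout (p : EuclideanSpace ℝ (Fin 2)) (θ : ℝ)
    (A : Set (EuclideanSpace ℝ (Fin 2))) : Set (EuclideanSpace ℝ (Fin 2)) :=
  (fun a => p + rotv θ (a - p)) '' A

lemma rotv_zero (θ : ℝ) : rotv θ (0 : EuclideanSpace ℝ (Fin 2)) = 0 := by
  ext i
  fin_cases i <;> simp [rotv]

lemma abs_complex_eq (v : EuclideanSpace ℝ (Fin 2)) :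
    ‖(⟨v 0, v 1⟩ : ℂ)‖ = ‖v‖ := by
  rw [EuclideanSpace.norm_eq, Complex.norm_def, Complex.normSq_mk]
  congr 1
  rw [Fin.sum_univ_two]
  simp [sq]

lemma exists_rot (v w : EuclideanSpace ℝ (Fin 2)) (hvw : ‖v‖ = ‖w‖) :
    ∃ θ : ℝ, rotv θ v = w := by
  set zv : ℂ := ⟨v 0, v 1⟩
  set zw : ℂ := ⟨w 0, w 1⟩
  set θ : ℝ := zw.arg - zv.arg with hθdef
  refine ⟨θ, ?_⟩
  have key : Complex.exp ((θ : ℂ) * Complex.I) * zv = zw := by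
    have h1 := Complex.norm_mul_exp_arg_mul_I zv
    have h2 := Complex.norm_mul_exp_arg_mul_I zw
    have habs : ‖zv‖ = ‖zw‖ := by
      rw [abs_complex_eq, abs_complex_eq, hvw]
    calc Complex.exp ((θ : ℂ) * Complex.I) * zv
        = Complex.exp ((θ : ℂ) * Complex.I) *
            ((‖zv‖ : ℂ) * Complex.exp (zv.arg * Complex.I)) := by rw [h1]
      _ = (‖zw‖ : ℂ) * Complex.exp (zw.arg * Complex.I) := by
          rw [habs, mul_left_comm, ← Complex.exp_add]
          congr 2
          push_cast [hθdef]
          ring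
      _ = zw := h2
  rw [Complex.exp_mul_I] at key
  have hre := congrArg Complex.re key
  have him := congrArg Complex.im key
  simp [add_mul, Complex.add_re, Complex.add_im, Complex.mul_re, Complex.mul_im,
    Complex.cos_ofReal_re, Complex.sin_ofReal_re, Complex.cos_ofReal_im,
    Complex.sin_ofReal_im, zv, zw] at hre him
  ext i
  fin_cases i <;> simp [rotv]
  · linarith [hre]
  · linarith [him]

lemma key_lemma (P : Finset (EuclideanSpace ℝ (Fin 2)))
    (L : EuclideanSpace ℝ (Fin 2) → Set (EuclideanSpace ℝ (Fin 2)))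
    (r : EuclideanSpace ℝ (Fin 2) → ℝ)
    (hconn : ∀ p ∈ P, IsConnected (L p))
    (hmem : ∀ p ∈ P, p ∈ L p)
    (hrad : ∀ p ∈ P, IsGreatest ((fun x => ‖x - p‖) '' L p) (r p))
    (h : ∀ θ : ℝ, ∀ p ∈ P, ∀ q ∈ P, p ≠ q →
      Disjoint (rotAbout p θ (L p)) (rotAbout q θ (L q)))
    (p : EuclideanSpace ℝ (Fin 2)) (hp : p ∈ P)
    (q : EuclideanSpace ℝ (Fin 2)) (hq : q ∈ P) (hpq : p ≠ q)
    (hle : dist p q ≤ r p) : False := by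
  -- the image of norms is connected, contains 0 and r p, hence contains dist p q
  have hcont : Continuous (fun x : EuclideanSpace ℝ (Fin 2) => ‖x - p‖) := by
    fun_prop
  have himg : IsPreconnected ((fun x => ‖x - p‖) '' L p) :=
    ((hconn p hp).image _ hcont.continuousOn).isPreconnected
  have h0 : (0 : ℝ) ∈ (fun x => ‖x - p‖) '' L p :=
    ⟨p, hmem p hp, by simp⟩
  have hr : r p ∈ (fun x => ‖x - p‖) '' L p := (hrad p hp).1
  have hd : dist p q ∈ (fun x => ‖x - p‖) '' L p := by
    apply himg.Icc_subset h0 hr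
    exact ⟨dist_nonneg, hle⟩
  obtain ⟨x, hx, hxd⟩ := hd
  have hxd' : ‖x - p‖ = dist p q := hxd
  have hnorm : ‖x - p‖ = ‖q - p‖ := by
    rw [hxd', dist_eq_norm, ← norm_neg]; congr 1; abel
  obtain ⟨θ, hθ⟩ := exists_rot (x - p) (q - p) hnorm
  have hq1 : q ∈ rotAbout p θ (L p) :=
    ⟨x, hx, by show p + rotv θ (x - p) = q; rw [hθ]; abel⟩
  have hq2 : q ∈ rotAbout q θ (L q) := ⟨q, hmem q hq, by simp [rotv_zero]⟩
  exact (h θ p hp q hq hpq).ne_of_mem hq1 hq2 rfl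

/-- Proper labelings of arbitrary compact connected labels are centre-disjoint: if the labels
never intersect under simultaneous rotation about their anchors, then any two distinct anchors
are at distance greater than the larger of the two circumradii. -/
theorem stmt16 (P : Finset (EuclideanSpace ℝ (Fin 2)))
    (L : EuclideanSpace ℝ (Fin 2) → Set (EuclideanSpace ℝ (Fin 2)))
    (r : EuclideanSpace ℝ (Fin 2) → ℝ)
    (hcomp : ∀ p ∈ P, IsCompact (L p))
    (hconn : ∀ p ∈ P, IsConnected (L p))
    (hmem : ∀ p ∈ P, p ∈ L p)
    (hrad : ∀ p ∈ P, IsGreatest ((fun x => ‖x - p‖) '' L p) (r p))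
    (h : ∀ θ : ℝ, ∀ p ∈ P, ∀ q ∈ P, p ≠ q →
      Disjoint (rotAbout p θ (L p)) (rotAbout q θ (L q))) :
    ∀ p ∈ P, ∀ q ∈ P, p ≠ q → dist p q > max (r p) (r q) := by
  intro p hp q hq hpq
  by_contra hcon
  push_neg at hcon
  rcases le_max_iff.mp hcon with h1 | h2
  · exact key_lemma P L r hconn hmem hrad h p hp q hq hpq h1
  · exact key_lemma P L r hconn hmem hrad h q hq p hp hpq.symm (by rwa [dist_comm])
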